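/- Let D be a consistent domain in action language B with transition function Φ, let Φ^a be a sound approximation of Φ, and let P = ⟨D,δ0,Δ⟩ be a conformant planning problem with δ0 a partial state and Δ a set of fluent literals. If α is an action sequence such that Φ̂^a(α,δ0) is defined and Δ ⊆ Φ̂^a(α,δ0), then α is a secure (conformant) plan for P: for every s0 ∈ comp(δ0), Φ̂(α,s0) ≠ ∅ and Δ ⊆ s for every s ∈ Φ̂(α,s0). -/

import Mathlib

/- # Action language B -/

/-- A fluent literal: a fluent or its negation. -/
inductive Lit (F : Type) where
  | pos : F → Lit F
  | neg : F → Lit F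

namespace Lit
/-- The complement of a fluent literal. -/
def compl {F : Type} : Lit F → Lit F
  | .pos f => .neg f
  | .neg f => .pos f
end Lit

/-- A set of fluent literals is consistent if it contains no fluent together with
its negation. -/
def ConsistentLits {F : Type} (s : Set (Lit F)) : Prop :=
  ∀ f : F, ¬ (Lit.pos f ∈ s ∧ Lit.neg f ∈ s)

/-- A set of fluent literals is complete if it contains each fluent or its negation. -/
def CompleteLits {F : Type} (s : Set (Lit F)) : Prop :=
  ∀ f : F, Lit.pos f ∈ s ∨ Lit.neg f ∈ s

/-- A static causal law `caused(prem, concl)`. -/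
structure StaticLaw (F : Type) where
  prem : Set (Lit F)
  concl : Lit F

/-- A dynamic causal law `causes(act, concl, prem)`. -/
structure DynamicLaw (F A : Type) where
  act : A
  concl : Lit F
  prem : Set (Lit F)

/-- An executability condition `executable(act, prem)`. -/
structure ExecLaw (F A : Type) where
  act : A
  prem : Set (Lit F)

/-- A domain in the action language B. -/
structure BDomain (F A : Type) where
  statics : Set (StaticLaw F)
  dynamics : Set (DynamicLaw F A)
  execs : Set (ExecLaw F A)

/-- `v` is closed under the set `K` of static causal laws. -/
def ClosedUnder {F : Type} (K : Set (StaticLaw F)) (v : Set (Lit F)) : Prop :=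
  ∀ r ∈ K, r.prem ⊆ v → r.concl ∈ v

/-- `IsCl K u v`: `v` is the least consistent set of literals containing `u`
and closed under `K`. -/
def IsCl {F : Type} (K : Set (StaticLaw F)) (u v : Set (Lit F)) : Prop :=
  u ⊆ v ∧ ConsistentLits v ∧ ClosedUnder K v ∧
    ∀ w, u ⊆ w → ConsistentLits w → ClosedUnder K w → v ⊆ w

/-- A state: a maximal (complete) consistent set of fluent literals closed under
the static causal laws. -/
def IsState {F A : Type} (D : BDomain F A) (s : Set (Lit F)) : Prop :=
  CompleteLits s ∧ ConsistentLits s ∧ ClosedUnder D.statics s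

/-- Action `a` is executable in `s`. -/
def Executable {F A : Type} (D : BDomain F A) (a : A) (s : Set (Lit F)) : Prop :=
  ∃ e ∈ D.execs, e.act = a ∧ e.prem ⊆ s

/-- The direct effects `e(a,s)` of action `a` in `s`. -/
def directEffects {F A : Type} (D : BDomain F A) (a : A) (s : Set (Lit F)) : Set (Lit F) :=
  { l | ∃ d ∈ D.dynamics, d.act = a ∧ d.concl = l ∧ d.prem ⊆ s }

/-- The transition function `Φ` of a domain. -/
def Phi {F A : Type} (D : BDomain F A) (a : A) (s : Set (Lit F)) : Set (Set (Lit F)) :=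
  { s' | Executable D a s ∧ IsState D s' ∧
      IsCl D.statics (directEffects D a s ∪ (s ∩ s')) s' }

/-- A planning problem `⟨D, Γ, Δ⟩`; `init` is the set of literals `f` with
`initially(f) ∈ Γ`, and `goal` is `Δ`. -/
structure PlanningProblem (F A : Type) where
  dom : BDomain F A
  init : Set (Lit F)
  goal : Set (Lit F)

/-- The action theory `(D,Γ)` is consistent: `Φ(a,s) ≠ ∅` whenever `a` is executable
in state `s`, and the initial state is a state. -/
def ConsistentTheory {F A : Type} (P : PlanningProblem F A) : Prop :=
  (∀ (a : A) (s : Set (Lit F)), IsState P.dom s → Executable P.dom a s →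
      (Phi P.dom a s).Nonempty) ∧
  IsState P.dom P.init

/-- `s0 a0 s1 ... a_{n-1} s_n` is a trajectory. -/
def IsTrajectory {F A : Type} (D : BDomain F A) (n : ℕ)
    (ss : ℕ → Set (Lit F)) (acts : ℕ → A) : Prop :=
  IsState D (ss 0) ∧ ∀ i < n, ss (i + 1) ∈ Phi D (acts i) (ss i)


/-- The extension `Φ̂` of `Φ` to action sequences: `Φ̂(⟨⟩,s) = {s}` and
`Φ̂(a::α, s) = ⋃_{s' ∈ Φ(a,s)} Φ̂(α,s')` when `Φ(a,s) ≠ ∅` and all recursive values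
are nonempty, and `∅` otherwise. -/
def PhiHat {F A : Type} (D : BDomain F A) : List A → Set (Lit F) → Set (Set (Lit F))
  | [], s => {s}
  | a :: rest, s =>
      { s'' | ((Phi D a s).Nonempty ∧
                ∀ s' ∈ Phi D a s, (PhiHat D rest s').Nonempty) ∧
              ∃ s' ∈ Phi D a s, s'' ∈ PhiHat D rest s' }

/-- The domain `D` is consistent: `Φ(a,s) ≠ ∅` whenever `a` is executable in the
state `s`. -/
def ConsistentDomain {F A : Type} (D : BDomain F A) : Prop :=
  ∀ (a : A) (s : Set (Lit F)), IsState D s → Executable D a s → (Phi D a s).Nonempty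

/-- `δ` is a partial state of `D`: a consistent set of literals contained in
some state. -/
def IsPartialState {F A : Type} (D : BDomain F A) (δ : Set (Lit F)) : Prop :=
  ConsistentLits δ ∧ ∃ s, IsState D s ∧ δ ⊆ s

/-- The completion `comp(δ)`: the set of states containing `δ`. -/
def comp {F A : Type} (D : BDomain F A) (δ : Set (Lit F)) : Set (Set (Lit F)) :=
  { s | IsState D s ∧ δ ⊆ s }

/-- `Φ^a` is a sound approximation of `Φ`: whenever `Φ^a(a,δ) = δ'` is defined and
`s ∈ comp(δ)`, `a` is executable in `s` and `δ' ⊆ s'` for every `s' ∈ Φ(a,s)`. -/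
def SoundApprox {F A : Type} (D : BDomain F A)
    (Phia : A → Set (Lit F) → Option (Set (Lit F))) : Prop :=
  ∀ (a : A) (δ δ' : Set (Lit F)), Phia a δ = some δ' →
    ∀ s ∈ comp D δ, Executable D a s ∧ ∀ s' ∈ Phi D a s, δ' ⊆ s'

/-- The extension `Φ̂^a` of a (partial) approximation to action sequences; it is
defined only when every intermediate value is defined. -/
def PhiaHat {F A : Type} (Phia : A → Set (Lit F) → Option (Set (Lit F))) :
    List A → Set (Lit F) → Option (Set (Lit F))
  | [], δ => some δ
  | a :: rest, δ => (Phia a δ).bind (PhiaHat Phia rest)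

/-- A conformant planning problem `⟨D,δ0,Δ⟩` and the notion of secure plan:
`α` is a secure (conformant) plan if for every `s0 ∈ comp(δ0)`, `Φ̂(α,s0) ≠ ∅`
and `Δ` holds in every state of `Φ̂(α,s0)`. -/
def SecurePlan {F A : Type} (D : BDomain F A) (δ0 Δ : Set (Lit F)) (α : List A) : Prop :=
  ∀ s0 ∈ comp D δ0, (PhiHat D α s0).Nonempty ∧ ∀ s ∈ PhiHat D α s0, Δ ⊆ s


lemma approx_main {F A : Type}
    (D : BDomain F A) (hD : ConsistentDomain D)
    (Phia : A → Set (Lit F) → Option (Set (Lit F)))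
    (hsound : SoundApprox D Phia) :
    ∀ (α : List A) (δ δ' : Set (Lit F)), PhiaHat Phia α δ = some δ' →
      ∀ s ∈ comp D δ, (PhiHat D α s).Nonempty ∧ ∀ t ∈ PhiHat D α s, δ' ⊆ t := by
  intro α
  induction α with
  | nil =>
    intro δ δ' hdef s hs
    simp only [PhiaHat, Option.some.injEq] at hdef
    subst hdef
    refine ⟨⟨s, rfl⟩, ?_⟩
    intro t ht
    simp only [PhiHat, Set.mem_singleton_iff] at ht
    subst ht
    exact hs.2
  | cons a rest ih =>
    intro δ δ' hdef s hs
    simp only [PhiaHat, Option.bind_eq_some_iff] at hdef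
    obtain ⟨δ1, h1, h2⟩ := hdef
    obtain ⟨hexec, hsub⟩ := hsound a δ δ1 h1 s hs
    have hne : (Phi D a s).Nonempty := hD a s hs.1 hexec
    have hcomp : ∀ s' ∈ Phi D a s, s' ∈ comp D δ1 := by
      intro s' hs'
      exact ⟨hs'.2.1, hsub s' hs'⟩
    have hih := fun s' (hs' : s' ∈ Phi D a s) => ih δ1 δ' h2 s' (hcomp s' hs')
    constructor
    · obtain ⟨s1, hs1⟩ := id hne
      obtain ⟨⟨t, ht⟩, _⟩ := hih s1 hs1
      exact ⟨t, ⟨⟨hne, fun u hu => (hih u hu).1⟩, s1, hs1, ht⟩⟩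
    · intro t ht
      obtain ⟨_, s', hs', ht'⟩ := ht
      exact (hih s' hs').2 t ht'

/-- **Conformant planning with a sound approximation**: if `Φ̂^a(α,δ0)` is defined
and the goal `Δ` holds in it, then `α` is a secure (conformant) plan for
`⟨D,δ0,Δ⟩`. -/
theorem approx_conformant_planning {F A : Type}
    (D : BDomain F A) (hD : ConsistentDomain D)
    (Phia : A → Set (Lit F) → Option (Set (Lit F)))
    (hsound : SoundApprox D Phia)
    (δ0 Δ : Set (Lit F)) (hδ0 : IsPartialState D δ0)
    (α : List A) (δ' : Set (Lit F))
    (hdef : PhiaHat Phia α δ0 = some δ') (hgoal : Δ ⊆ δ') :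
    SecurePlan D δ0 Δ α := by
  intro s0 hs0
  obtain ⟨hne, hall⟩ := approx_main D hD Phia hsound α δ0 δ' hdef s0 hs0
  exact ⟨hne, fun s hsmem => hgoal.trans (hall s hsmem)⟩
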